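/- arXiv:1901.10763 — 7 statements merged into one kernel-verified Lean document; each statement's English description precedes it below -/
import Mathlib

section
/- Let N ≥ 1, let C ⊂ ℝ^N be a compact set, and let D : ℝ^N → ℝ be continuous. Suppose D attains its minimum over C at a unique point a* ∈ C, and that a* belongs to the interior of C. For T > 0 define the Gibbs probability measure P_T on ℝ^N by P_T(B) = ∫_{B ∩ C} exp(−D(a)/T) da / ∫_C exp(−D(a)/T) da for measurable B. Then for every open set U ⊆ ℝ^N containing a*, P_T(U) → 1 as T → 0⁺. -/
open Real Filter Topology MeasureTheory

theorem stmt3 (N : ℕ) (hN : 1 ≤ N)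
    (C : Set (EuclideanSpace ℝ (Fin N))) (hC : IsCompact C)
    (D : EuclideanSpace ℝ (Fin N) → ℝ) (hD : Continuous D)
    (astar : EuclideanSpace ℝ (Fin N)) (hastar : astar ∈ C)
    (hmin : ∀ a ∈ C, D astar ≤ D a)
    (huniq : ∀ a ∈ C, D a = D astar → a = astar)
    (hint : astar ∈ interior C)
    (U : Set (EuclideanSpace ℝ (Fin N))) (hU : IsOpen U) (haU : astar ∈ U) :
    Filter.Tendsto
      (fun T : ℝ =>
        (∫ a in U ∩ C, Real.exp (-(D a / T))) / ∫ a in C, Real.exp (-(D a / T)))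
      (𝓝[>] (0 : ℝ)) (𝓝 1) := by
  -- Integrability of the Gibbs density on subsets of C
  have hf_int : ∀ (T : ℝ) (s : Set (EuclideanSpace ℝ (Fin N))), s ⊆ C →
      IntegrableOn (fun a => Real.exp (-(D a / T))) s := by
    intro T s hs
    exact ((((hD.div_const T).neg.rexp).continuousOn).integrableOn_compact hC).mono_set hs
  -- Positivity of the denominator
  have hmuC : 0 < volume C := by
    obtain ⟨r, hr, hball⟩ := Metric.isOpen_iff.mp isOpen_interior astar hint
    calc (0 : ENNReal) < volume (Metric.ball astar r) := Metric.measure_ball_pos _ _ hr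
      _ ≤ volume C := measure_mono (hball.trans interior_subset)
  have hpos : ∀ T : ℝ, 0 < ∫ a in C, Real.exp (-(D a / T)) := by
    intro T
    rw [setIntegral_pos_iff_support_of_nonneg_ae
      (ae_of_all _ fun a => (Real.exp_pos _).le) (hf_int T C subset_rfl)]
    have hsupp : Function.support (fun a => Real.exp (-(D a / T))) = Set.univ := by
      ext a; simp [Function.mem_support, Real.exp_ne_zero]
    rw [hsupp, Set.univ_inter]
    exact hmuC
  by_cases hKe : C \ U = ∅
  · -- C ⊆ U : the ratio is identically 1
    have hCU : U ∩ C = C := Set.inter_eq_right.mpr (Set.diff_eq_empty.mp hKe)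
    simp only [hCU]
    have : ∀ T : ℝ, (∫ a in C, Real.exp (-(D a / T))) / (∫ a in C, Real.exp (-(D a / T))) = 1 :=
      fun T => div_self (hpos T).ne'
    simp only [this]
    exact tendsto_const_nhds
  · -- main case: K = C \ U is a nonempty compact set
    obtain ⟨x₀, hx₀K, hx₀min⟩ := (hC.diff hU).exists_isMinOn
      (Set.nonempty_iff_ne_empty.mpr hKe) hD.continuousOn
    set m : ℝ := D astar with hm
    set m₁ : ℝ := D x₀ with hm₁
    have hmm₁ : m < m₁ := by
      rcases lt_or_eq_of_le (hmin x₀ hx₀K.1) with h | h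
      · exact h
      · exact absurd (huniq x₀ hx₀K.1 h.symm) fun he => hx₀K.2 (he ▸ haU)
    set m₂ : ℝ := (m + m₁) / 2 with hm₂def
    have hm₂₁ : m₂ < m₁ := by rw [hm₂def]; linarith
    have hmm₂ : m < m₂ := by rw [hm₂def]; linarith
    -- a small ball around astar inside C on which D < m₂
    have hVopen : IsOpen (interior C ∩ D ⁻¹' Set.Iio m₂) :=
      isOpen_interior.inter (isOpen_Iio.preimage hD)
    have hVmem : astar ∈ interior C ∩ D ⁻¹' Set.Iio m₂ := ⟨hint, hmm₂⟩
    obtain ⟨r, hr, hball⟩ := Metric.isOpen_iff.mp hVopen astar hVmem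
    set B := Metric.ball astar r with hB
    have hBC : B ⊆ C := fun x hx => interior_subset (hball hx).1
    have hBD : ∀ x ∈ B, D x ≤ m₂ := fun x hx => (hball hx).2.le
    have hμB : 0 < (volume B).toReal :=
      ENNReal.toReal_pos (Metric.measure_ball_pos _ _ hr).ne' measure_ball_lt_top.ne
    have hμK : volume (C \ U) < ⊤ :=
      lt_of_le_of_lt (measure_mono Set.diff_subset) hC.measure_lt_top
    have hKmeas : MeasurableSet (C \ U) := hC.measurableSet.diff hU.measurableSet
    -- the ratio equals 1 minus the mass of C \ U
    have key : ∀ T : ℝ, 0 < T →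
        (∫ a in U ∩ C, Real.exp (-(D a / T))) / (∫ a in C, Real.exp (-(D a / T)))
          = 1 - (∫ a in C \ U, Real.exp (-(D a / T))) / (∫ a in C, Real.exp (-(D a / T))) := by
      intro T hT
      have hdisj : Disjoint (U ∩ C) (C \ U) :=
        Set.disjoint_left.mpr fun a ha hb => hb.2 ha.1
      have hunion : (U ∩ C) ∪ (C \ U) = C := by
        rw [Set.inter_comm]; exact Set.inter_union_diff C U
      have hsplit : (∫ a in C, Real.exp (-(D a / T)))
          = (∫ a in U ∩ C, Real.exp (-(D a / T))) + ∫ a in C \ U, Real.exp (-(D a / T)) := by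
        rw [← setIntegral_union hdisj hKmeas
          (hf_int T _ Set.inter_subset_right) (hf_int T _ Set.diff_subset), hunion]
      rw [eq_sub_iff_add_eq, ← add_div, ← hsplit, div_self (hpos T).ne']
    -- quantitative bound on the mass of C \ U
    have bound : ∀ T : ℝ, 0 < T →
        (∫ a in C \ U, Real.exp (-(D a / T))) / (∫ a in C, Real.exp (-(D a / T)))
          ≤ ((volume (C \ U)).toReal / (volume B).toReal) * Real.exp (-((m₁ - m₂) / T)) := by
      intro T hT
      have hIB : Real.exp (-(m₂ / T)) * (volume B).toReal
          ≤ ∫ a in B, Real.exp (-(D a / T)) := by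
        apply setIntegral_ge_of_const_le_real measurableSet_ball measure_ball_lt_top.ne
          ?_ (hf_int T B hBC)
        intro x hx
        have : D x / T ≤ m₂ / T := by gcongr; exact hBD x hx
        exact Real.exp_le_exp.mpr (by linarith)
      have hIBC : (∫ a in B, Real.exp (-(D a / T))) ≤ ∫ a in C, Real.exp (-(D a / T)) :=
        setIntegral_mono_set (hf_int T C subset_rfl)
          (ae_of_all _ fun a => (Real.exp_pos _).le)
          (HasSubset.Subset.eventuallyLE hBC)
      have hIK : (∫ a in C \ U, Real.exp (-(D a / T)))
          ≤ Real.exp (-(m₁ / T)) * (volume (C \ U)).toReal := by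
        have hb : ∀ x ∈ C \ U, ‖Real.exp (-(D x / T))‖ ≤ Real.exp (-(m₁ / T)) := by
          intro x hx
          rw [Real.norm_eq_abs, abs_of_pos (Real.exp_pos _)]
          have hx₁ : m₁ ≤ D x := hx₀min hx
          have : m₁ / T ≤ D x / T := by gcongr
          exact Real.exp_le_exp.mpr (by linarith)
        have hn := norm_setIntegral_le_of_norm_le_const (μ := volume) (s := C \ U)
          (f := fun a => Real.exp (-(D a / T))) hμK hb
        calc (∫ a in C \ U, Real.exp (-(D a / T)))
            ≤ ‖∫ a in C \ U, Real.exp (-(D a / T))‖ := le_abs_self _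
          _ ≤ Real.exp (-(m₁ / T)) * (volume (C \ U)).toReal := hn
      have hden_pos : (0 : ℝ) < Real.exp (-(m₂ / T)) * (volume B).toReal :=
        mul_pos (Real.exp_pos _) hμB
      have step : (∫ a in C \ U, Real.exp (-(D a / T))) / (∫ a in C, Real.exp (-(D a / T)))
          ≤ (Real.exp (-(m₁ / T)) * (volume (C \ U)).toReal)
            / (Real.exp (-(m₂ / T)) * (volume B).toReal) :=
        div_le_div₀ (by positivity) hIK hden_pos (hIB.trans hIBC)
      refine step.trans (le_of_eq ?_)
      have hexp : Real.exp (-((m₁ - m₂) / T)) = Real.exp (-(m₁ / T)) / Real.exp (-(m₂ / T)) := by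
        rw [← Real.exp_sub]; congr 1; field_simp; ring
      rw [hexp]
      field_simp
    -- the bound tends to 0
    have hlim : Tendsto (fun T : ℝ =>
        ((volume (C \ U)).toReal / (volume B).toReal) * Real.exp (-((m₁ - m₂) / T)))
        (𝓝[>] (0 : ℝ)) (𝓝 0) := by
      have h1 : Tendsto (fun T : ℝ => (m₁ - m₂) / T) (𝓝[>] (0 : ℝ)) atTop := by
        have := tendsto_inv_nhdsGT_zero.const_mul_atTop (sub_pos.mpr hm₂₁)
        simpa [div_eq_mul_inv] using this
      have h2 : Tendsto (fun T : ℝ => Real.exp (-((m₁ - m₂) / T))) (𝓝[>] (0 : ℝ)) (𝓝 0) :=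
        Real.tendsto_exp_atBot.comp (tendsto_neg_atTop_atBot.comp h1)
      have := h2.const_mul ((volume (C \ U)).toReal / (volume B).toReal)
      simpa using this
    -- squeeze
    have hsq : Tendsto (fun T : ℝ =>
        (∫ a in C \ U, Real.exp (-(D a / T))) / (∫ a in C, Real.exp (-(D a / T))))
        (𝓝[>] (0 : ℝ)) (𝓝 0) := by
      apply squeeze_zero'
      · filter_upwards [self_mem_nhdsWithin] with T hT
        exact div_nonneg (setIntegral_nonneg hKmeas fun x _ => (Real.exp_pos _).le)
          (hpos T).le
      · filter_upwards [self_mem_nhdsWithin] with T hT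
        exact bound T hT
      · exact hlim
    have hfinal : Tendsto (fun T : ℝ =>
        1 - (∫ a in C \ U, Real.exp (-(D a / T))) / (∫ a in C, Real.exp (-(D a / T))))
        (𝓝[>] (0 : ℝ)) (𝓝 1) := by
      have := hsq.const_sub (1:ℝ)
      simpa using this
    apply hfinal.congr'
    filter_upwards [self_mem_nhdsWithin] with T hT
    exact (key T hT).symm
end

section
/- Let N ≥ 1, let p ≥ 2 be an even integer, let c¹, …, c^{n_c} ∈ ℝ^N be control points, and let w ∈ ℝ^{n_c} be a weight vector. Define D^mps(a) = ∑_{i=1}^{n_c} w_i ‖a − c^i‖^p log ‖a − c^i‖ (each term taken to be 0 when a = c^i), where ‖·‖ is the Euclidean norm on ℝ^N and log is the natural logarithm. Then D^mps(a)/(‖a‖^p log ‖a‖) → ∑_{i=1}^{n_c} w_i as ‖a‖ → +∞. -/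
open Real Filter Topology

private lemma key_ratio {E : Type*} [NormedAddCommGroup E] (p : ℕ) (c : E) :
    Filter.Tendsto
      (fun a : E => (‖a - c‖ ^ p * Real.log ‖a - c‖) / (‖a‖ ^ p * Real.log ‖a‖))
      (Filter.comap (fun a : E => ‖a‖) Filter.atTop) (𝓝 1) := by
  set l := Filter.comap (fun a : E => ‖a‖) Filter.atTop with hl
  have hn : Tendsto (fun a : E => ‖a‖) l atTop := tendsto_comap
  have hbig : ∀ᶠ a : E in l, 2 + ‖c‖ ≤ ‖a‖ := hn.eventually_ge_atTop _
  have hinv : Tendsto (fun a : E => ‖c‖ / ‖a‖) l (𝓝 0) :=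
    tendsto_const_nhds.div_atTop hn
  have hr0 : Tendsto (fun a : E => ‖a - c‖ / ‖a‖ - 1) l (𝓝 0) := by
    apply squeeze_zero_norm' ?_ hinv
    filter_upwards [hbig] with a ha
    have ha0 : (0:ℝ) < ‖a‖ := by
      have : (0:ℝ) ≤ ‖c‖ := norm_nonneg _
      linarith
    have h1 : ‖a - c‖ / ‖a‖ - 1 = (‖a - c‖ - ‖a‖) / ‖a‖ := by
      field_simp
    have h2 : |‖a - c‖ - ‖a‖| ≤ ‖c‖ := by
      have := abs_norm_sub_norm_le (a - c) a
      simpa [norm_sub_rev] using this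
    rw [Real.norm_eq_abs, h1, abs_div, abs_of_pos ha0]
    gcongr
  have hr : Tendsto (fun a : E => ‖a - c‖ / ‖a‖) l (𝓝 1) := by
    have := hr0.add (tendsto_const_nhds (x := (1:ℝ)))
    simpa using this
  have hlogr : Tendsto (fun a : E => Real.log (‖a - c‖ / ‖a‖)) l (𝓝 0) := by
    have := (Real.continuousAt_log one_ne_zero).tendsto.comp hr
    simpa [Real.log_one, Function.comp_def] using this
  have hlog : Tendsto (fun a : E => Real.log ‖a‖) l atTop :=
    Real.tendsto_log_atTop.comp hn
  have hloginv : Tendsto (fun a : E => (Real.log ‖a‖)⁻¹) l (𝓝 0) :=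
    hlog.inv_tendsto_atTop
  have hmain : Tendsto
      (fun a : E => (‖a - c‖ / ‖a‖) ^ p *
        (1 + Real.log (‖a - c‖ / ‖a‖) * (Real.log ‖a‖)⁻¹)) l (𝓝 1) := by
    have := (hr.pow p).mul ((tendsto_const_nhds (x := (1:ℝ))).add (hlogr.mul hloginv))
    simpa using this
  apply hmain.congr'
  filter_upwards [hbig] with a ha
  have hc : (0:ℝ) ≤ ‖c‖ := norm_nonneg _
  have ha0 : (0:ℝ) < ‖a‖ := by linarith
  have hac : (0:ℝ) < ‖a - c‖ := by
    have := abs_norm_sub_norm_le (a - c) a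
    have h2 : |‖a - c‖ - ‖a‖| ≤ ‖c‖ := by simpa [norm_sub_rev] using this
    have := abs_le.mp h2
    linarith [this.1]
  have hla : (0:ℝ) < Real.log ‖a‖ := Real.log_pos (by linarith)
  rw [Real.log_div hac.ne' ha0.ne', div_pow]
  field_simp
  ring

theorem stmt5 (N : ℕ) (hN : 1 ≤ N) (p : ℕ) (heven : Even p) (hp2 : 2 ≤ p)
    (nc : ℕ) (c : Fin nc → EuclideanSpace ℝ (Fin N)) (w : Fin nc → ℝ) :
    Filter.Tendsto
      (fun a : EuclideanSpace ℝ (Fin N) =>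
        (∑ i, w i * (‖a - c i‖ ^ p * Real.log ‖a - c i‖)) / (‖a‖ ^ p * Real.log ‖a‖))
      (Filter.comap (fun a : EuclideanSpace ℝ (Fin N) => ‖a‖) Filter.atTop)
      (𝓝 (∑ i, w i)) := by
  have heq : ∀ a : EuclideanSpace ℝ (Fin N),
      (∑ i, w i * (‖a - c i‖ ^ p * Real.log ‖a - c i‖)) / (‖a‖ ^ p * Real.log ‖a‖)
        = ∑ i, w i * ((‖a - c i‖ ^ p * Real.log ‖a - c i‖) / (‖a‖ ^ p * Real.log ‖a‖)) := by
    intro a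
    rw [Finset.sum_div]
    simp [mul_div_assoc]
  have h : Tendsto
      (fun a : EuclideanSpace ℝ (Fin N) =>
        ∑ i, w i * ((‖a - c i‖ ^ p * Real.log ‖a - c i‖) / (‖a‖ ^ p * Real.log ‖a‖)))
      (Filter.comap (fun a : EuclideanSpace ℝ (Fin N) => ‖a‖) Filter.atTop)
      (𝓝 (∑ i, w i * 1)) :=
    tendsto_finset_sum _ fun i _ => tendsto_const_nhds.mul (key_ratio p (c i))
  simpa [heq] using h
end

section
/- Let N ≥ 1, let p ≥ 1 be an odd integer, let c¹, …, c^{n_c} ∈ ℝ^N be control points, and let w ∈ ℝ^{n_c} satisfy ∑_{i=1}^{n_c} w_i > 0. Define D^mps(a) = ∑_{i=1}^{n_c} w_i ‖a − c^i‖^p, where ‖·‖ is the Euclidean norm. Then D^mps(a) → +∞ as ‖a‖ → +∞; that is, inf_{‖a‖ > R} D^mps(a) → +∞ as R → +∞. -/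
open Real Filter Topology

lemma aux_pow_diff (n : ℕ) {x y B : ℝ} (hx0 : 0 ≤ x) (hy0 : 0 ≤ y) (hx : x ≤ B)
    (hy : y ≤ B) : |x ^ n - y ^ n| ≤ n * B ^ (n - 1) * |x - y| := by
  have hB : 0 ≤ B := le_trans hx0 hx
  rw [← geom_sum₂_mul x y n, abs_mul]
  gcongr
  calc |∑ i ∈ Finset.range n, x ^ i * y ^ (n - 1 - i)|
      ≤ ∑ i ∈ Finset.range n, |x ^ i * y ^ (n - 1 - i)| := Finset.abs_sum_le_sum_abs _ _
    _ ≤ ∑ i ∈ Finset.range n, B ^ (n - 1) := by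
        apply Finset.sum_le_sum
        intro i hi
        rw [Finset.mem_range] at hi
        rw [abs_mul, abs_pow, abs_pow, abs_of_nonneg hx0, abs_of_nonneg hy0]
        have h1 : x ^ i * y ^ (n - 1 - i) ≤ B ^ i * B ^ (n - 1 - i) := by
          apply mul_le_mul (pow_le_pow_left₀ hx0 hx i) (pow_le_pow_left₀ hy0 hy _)
            (pow_nonneg hy0 _) (pow_nonneg hB _)
        calc x ^ i * y ^ (n - 1 - i) ≤ B ^ i * B ^ (n - 1 - i) := h1
          _ = B ^ (n - 1) := by
              rw [← pow_add]
              congr 1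
              omega
    _ = n * B ^ (n - 1) := by rw [Finset.sum_const, Finset.card_range, nsmul_eq_mul]

theorem stmt6 (N : ℕ) (hN : 1 ≤ N) (p : ℕ) (hodd : Odd p) (hp1 : 1 ≤ p)
    (nc : ℕ) (c : Fin nc → EuclideanSpace ℝ (Fin N)) (w : Fin nc → ℝ)
    (hw : 0 < ∑ i, w i) :
    Filter.Tendsto
      (fun a : EuclideanSpace ℝ (Fin N) => ∑ i, w i * ‖a - c i‖ ^ p)
      (Filter.comap (fun a : EuclideanSpace ℝ (Fin N) => ‖a‖) Filter.atTop)
      Filter.atTop := by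
  set S := ∑ i, w i with hS
  set M := ∑ i, ‖c i‖ with hM
  have hM0 : 0 ≤ M := Finset.sum_nonneg fun i _ => norm_nonneg _
  have hci : ∀ i, ‖c i‖ ≤ M := fun i =>
    Finset.single_le_sum (fun j _ => norm_nonneg (c j)) (Finset.mem_univ i)
  set W := ∑ i, |w i| with hW
  have hW0 : 0 ≤ W := Finset.sum_nonneg fun i _ => abs_nonneg _
  set C : ℝ := W * (p * (2 * 1) ^ (p - 1) * M) with hC
  have hC0 : 0 ≤ C := by positivity
  set T : ℝ := max (max 1 M) (C / S) with hT
  -- the minorant tends to atTop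
  have hmin : Tendsto (fun a : EuclideanSpace ℝ (Fin N) => S * ‖a‖ - C)
      (Filter.comap (fun a : EuclideanSpace ℝ (Fin N) => ‖a‖) Filter.atTop) Filter.atTop := by
    have h1 : Tendsto (fun a : EuclideanSpace ℝ (Fin N) => ‖a‖)
        (Filter.comap (fun a : EuclideanSpace ℝ (Fin N) => ‖a‖) Filter.atTop) Filter.atTop :=
      tendsto_comap
    have h2 := h1.const_mul_atTop hw
    simpa [sub_eq_add_neg] using tendsto_atTop_add_const_right _ (-C) h2
  apply tendsto_atTop_mono' _ _ hmin
  have hev : ∀ᶠ a : EuclideanSpace ℝ (Fin N) in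
      (Filter.comap (fun a : EuclideanSpace ℝ (Fin N) => ‖a‖) Filter.atTop),
      T ≤ ‖a‖ := by
    have h1 : Tendsto (fun a : EuclideanSpace ℝ (Fin N) => ‖a‖)
        (Filter.comap (fun a : EuclideanSpace ℝ (Fin N) => ‖a‖) Filter.atTop) Filter.atTop :=
      tendsto_comap
    exact h1.eventually_ge_atTop T
  filter_upwards [hev] with a ha
  set t := ‖a‖ with ht
  have ht1 : (1:ℝ) ≤ t := le_trans (le_trans (le_max_left 1 M) (le_max_left _ _)) ha
  have htM : M ≤ t := le_trans (le_trans (le_max_right 1 M) (le_max_left _ _)) ha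
  have htCS : C / S ≤ t := le_trans (le_max_right _ _) ha
  have ht0 : 0 ≤ t := le_trans zero_le_one ht1
  have hCSt : C ≤ S * t := by
    rw [div_le_iff₀ hw] at htCS
    linarith [htCS]
  -- key pointwise bound
  have key : ∀ i : Fin nc, |w i * ‖a - c i‖ ^ p - w i * t ^ p|
      ≤ |w i| * (p * (2 * t) ^ (p - 1) * M) := by
    intro i
    rw [← mul_sub, abs_mul]
    gcongr
    have hx0 : (0:ℝ) ≤ ‖a - c i‖ := norm_nonneg _
    have hx : ‖a - c i‖ ≤ 2 * t := by
      calc ‖a - c i‖ ≤ ‖a‖ + ‖c i‖ := norm_sub_le _ _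
        _ ≤ t + M := by gcongr; exact hci i
        _ ≤ 2 * t := by linarith
    have hy : t ≤ 2 * t := by linarith
    calc |‖a - c i‖ ^ p - t ^ p| ≤ p * (2 * t) ^ (p - 1) * |‖a - c i‖ - t| :=
          aux_pow_diff p hx0 ht0 hx hy
      _ ≤ p * (2 * t) ^ (p - 1) * M := by
          gcongr
          calc |‖a - c i‖ - ‖a‖| ≤ ‖a - c i - a‖ := abs_norm_sub_norm_le _ _
            _ = ‖c i‖ := by rw [sub_sub_cancel_left, norm_neg]
            _ ≤ M := hci i
  -- sum bound
  have hsum : S * t ^ p - W * (p * (2 * t) ^ (p - 1) * M) ≤ ∑ i, w i * ‖a - c i‖ ^ p := by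
    have h1 : |∑ i, w i * ‖a - c i‖ ^ p - S * t ^ p|
        ≤ W * (p * (2 * t) ^ (p - 1) * M) := by
      rw [hS, Finset.sum_mul, ← Finset.sum_sub_distrib, hW, Finset.sum_mul]
      calc |∑ i, (w i * ‖a - c i‖ ^ p - w i * t ^ p)|
          ≤ ∑ i, |w i * ‖a - c i‖ ^ p - w i * t ^ p| := Finset.abs_sum_le_sum_abs _ _
        _ ≤ ∑ i, |w i| * (p * (2 * t) ^ (p - 1) * M) :=
            Finset.sum_le_sum fun i _ => key i
    have := neg_le_of_abs_le h1
    linarith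
  -- compare with minorant
  have h2t : W * (p * (2 * t) ^ (p - 1) * M) = C * t ^ (p - 1) := by
    rw [hC, mul_pow, mul_pow]
    ring
  have htp : t ^ p = t * t ^ (p - 1) := by
    rw [← pow_succ']
    congr 1
    omega
  have hfinal : S * t - C ≤ ∑ i, w i * ‖a - c i‖ ^ p := by
    have h3 : S * t ^ p - W * (p * (2 * t) ^ (p - 1) * M)
        = (S * t - C) * t ^ (p - 1) := by rw [h2t, htp]; ring
    have h4 : (S * t - C) ≤ (S * t - C) * t ^ (p - 1) := by
      nth_rewrite 1 [← mul_one (S * t - C)]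
      apply mul_le_mul_of_nonneg_left (one_le_pow₀ ht1) ?_
      · linarith
    calc S * t - C ≤ (S * t - C) * t ^ (p - 1) := h4
      _ = S * t ^ p - W * (p * (2 * t) ^ (p - 1) * M) := h3.symm
      _ ≤ _ := hsum
  exact hfinal
end

section
/- Let N ≥ 1, let p ≥ 2 be an even integer, let c¹, …, c^{n_c} ∈ ℝ^N be control points, and let w ∈ ℝ^{n_c} satisfy ∑_{i=1}^{n_c} w_i > 0. Define D^mps(a) = ∑_{i=1}^{n_c} w_i ‖a − c^i‖^p log ‖a − c^i‖ (each term taken to be 0 when a = c^i), where ‖·‖ is the Euclidean norm. Then D^mps(a) → +∞ as ‖a‖ → +∞; that is, inf_{‖a‖ > R} D^mps(a) → +∞ as R → +∞. -/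
open Real Filter Topology

private lemma aux_pow_sub_pow (n : ℕ) : ∀ {s t : ℝ}, 0 ≤ s → s ≤ t →
    t ^ (n + 1) - s ^ (n + 1) ≤ (n + 1 : ℝ) * t ^ n * (t - s) := by
  induction n with
  | zero => intro s t hs hst; simp
  | succ n ih =>
    intro s t hs hst
    have h1 := ih hs hst
    have h2 : s ^ (n + 1) ≤ t ^ (n + 1) := pow_le_pow_left₀ hs hst _
    have h3 : (0:ℝ) ≤ t := le_trans hs hst
    have h4 : (0:ℝ) ≤ t ^ n := pow_nonneg h3 n
    calc t ^ (n + 2) - s ^ (n + 2) = t * (t ^ (n+1) - s ^ (n+1)) + (t - s) * s ^ (n+1) := by ring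
    _ ≤ t * ((n + 1 : ℝ) * t ^ n * (t - s)) + (t - s) * t ^ (n+1) := by
        have := mul_le_mul_of_nonneg_left h1 h3
        have := mul_le_mul_of_nonneg_left h2 (sub_nonneg.mpr hst)
        linarith
    _ = (n + 2 : ℝ) * t ^ (n+1) * (t - s) := by ring
    _ = ((n+1 : ℕ) + 1 : ℝ) * t ^ (n+1) * (t - s) := by push_cast; ring

private lemma aux_phi_mono (p : ℕ) {x y : ℝ} (hx : 1 ≤ x) (hxy : x ≤ y) :
    x ^ p * Real.log x ≤ y ^ p * Real.log y := by
  have hy : 1 ≤ y := le_trans hx hxy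
  have := Real.log_le_log (by linarith : (0:ℝ) < x) hxy
  exact mul_le_mul (pow_le_pow_left₀ (by linarith) hxy p) this
    (Real.log_nonneg hx) (pow_nonneg (by linarith) p)

private lemma aux_diff_bound (q : ℕ) {s M : ℝ} (hs1 : 1 ≤ s) (hlog : 1 ≤ Real.log s)
    (hM : 0 ≤ M) (ht2s : s + 2*M ≤ 2*s) :
    (s + 2*M) ^ (q+1) * Real.log (s + 2*M) - s ^ (q+1) * Real.log s ≤
      2*M*2^(q+1)*(1+(q+1 : ℝ)) * (s ^ q * Real.log s) := by
  set t := s + 2*M with htdef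
  have hs0 : (0:ℝ) < s := by linarith
  have hst : s ≤ t := by simp [htdef]; linarith
  have ht0 : (0:ℝ) < t := by linarith
  have hlogdiff : Real.log t - Real.log s ≤ 2*M / s := by
    have h1 : Real.log t - Real.log s = Real.log (t / s) := (Real.log_div (ne_of_gt ht0) (ne_of_gt hs0)).symm
    have h2 : Real.log (t / s) ≤ t / s - 1 := Real.log_le_sub_one_of_pos (by positivity)
    have h3 : t / s - 1 = 2*M / s := by field_simp; rw [htdef]; ring
    linarith
  have hpowdiff : t ^ (q+1) - s ^ (q+1) ≤ (q+1 : ℝ) * t ^ q * (2*M) := by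
    have hts : t - s = 2*M := by rw [htdef]; ring
    have h := aux_pow_sub_pow q (le_of_lt hs0) hst
    rw [hts] at h; exact h
  have htq : t ^ q ≤ 2^q * s ^ q := by
    calc t ^ q ≤ (2*s) ^ q := pow_le_pow_left₀ (le_of_lt ht0) ht2s q
    _ = 2^q * s^q := mul_pow 2 s q
  have htq1 : t ^ (q+1) ≤ 2^(q+1) * s ^ (q+1) := by
    calc t ^ (q+1) ≤ (2*s) ^ (q+1) := pow_le_pow_left₀ (le_of_lt ht0) ht2s _
    _ = 2^(q+1) * s^(q+1) := mul_pow 2 s _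
  have hsq : (0:ℝ) < s ^ q := pow_pos hs0 q
  have hlognn : 0 ≤ Real.log s := by linarith
  -- main decomposition
  have hdec : t ^ (q+1) * Real.log t - s ^ (q+1) * Real.log s =
      t ^ (q+1) * (Real.log t - Real.log s) + (t ^ (q+1) - s ^ (q+1)) * Real.log s := by ring
  have h1 : t ^ (q+1) * (Real.log t - Real.log s) ≤ 2*M*2^(q+1) * s ^ q := by
    have hld0 : 0 ≤ Real.log t - Real.log s := by
      have := Real.log_le_log hs0 hst; linarith
    calc t ^ (q+1) * (Real.log t - Real.log s) ≤ (2^(q+1) * s^(q+1)) * (2*M/s) :=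
          mul_le_mul htq1 hlogdiff hld0 (by positivity : (0:ℝ) ≤ 2^(q+1) * s^(q+1))
    _ = 2*M*2^(q+1) * s ^ q := by
          rw [pow_succ]; field_simp; ring
  have h2 : (t ^ (q+1) - s ^ (q+1)) * Real.log s ≤ (q+1:ℝ) * 2^(q+1) * (2*M) * (s^q * Real.log s) := by
    have hb : (q+1:ℝ) * t ^ q * (2*M) ≤ (q+1:ℝ) * (2^(q+1) * s^q) * (2*M) := by
      have h2q : (2:ℝ)^q ≤ 2^(q+1) := pow_le_pow_right₀ (by norm_num) (by omega)
      have hx : (2:ℝ)^q * s^q ≤ 2^(q+1) * s^q := mul_le_mul_of_nonneg_right h2q (le_of_lt hsq)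
      have h' : t^q ≤ 2^(q+1) * s^q := le_trans htq hx
      calc (q+1:ℝ) * t ^ q * (2*M) = ((q+1:ℝ) * (2*M)) * t^q := by ring
      _ ≤ ((q+1:ℝ) * (2*M)) * (2^(q+1) * s^q) := mul_le_mul_of_nonneg_left h' (by positivity)
      _ = (q+1:ℝ) * (2^(q+1) * s^q) * (2*M) := by ring
    calc (t ^ (q+1) - s ^ (q+1)) * Real.log s ≤ ((q+1:ℝ) * t ^ q * (2*M)) * Real.log s :=
          mul_le_mul_of_nonneg_right hpowdiff hlognn
    _ ≤ ((q+1:ℝ) * (2^(q+1) * s^q) * (2*M)) * Real.log s := mul_le_mul_of_nonneg_right hb hlognn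
    _ = (q+1:ℝ) * 2^(q+1) * (2*M) * (s^q * Real.log s) := by ring
  have h1' : t ^ (q+1) * (Real.log t - Real.log s) ≤ 2*M*2^(q+1) * (s ^ q * Real.log s) := by
    have hx : s^q ≤ s^q * Real.log s := by nlinarith [le_of_lt hsq]
    calc t ^ (q+1) * (Real.log t - Real.log s) ≤ 2*M*2^(q+1) * s ^ q := h1
    _ ≤ 2*M*2^(q+1) * (s ^ q * Real.log s) := mul_le_mul_of_nonneg_left hx (by positivity)
  rw [hdec]
  nlinarith [h1', h2]

set_option maxHeartbeats 1000000 in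
theorem stmt7 (N : ℕ) (hN : 1 ≤ N) (p : ℕ) (heven : Even p) (hp2 : 2 ≤ p)
    (nc : ℕ) (c : Fin nc → EuclideanSpace ℝ (Fin N)) (w : Fin nc → ℝ)
    (hw : 0 < ∑ i, w i) :
    Filter.Tendsto
      (fun a : EuclideanSpace ℝ (Fin N) =>
        ∑ i, w i * (‖a - c i‖ ^ p * Real.log ‖a - c i‖))
      (Filter.comap (fun a : EuclideanSpace ℝ (Fin N) => ‖a‖) Filter.atTop)
      Filter.atTop := by
  set S : ℝ := ∑ i, w i with hS
  set M : ℝ := 1 + ∑ i, ‖c i‖ with hMdef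
  have hM1 : 1 ≤ M := by
    have : (0:ℝ) ≤ ∑ i, ‖c i‖ := Finset.sum_nonneg fun i _ => norm_nonneg _
    simp [hMdef]; linarith
  have hcM : ∀ i, ‖c i‖ ≤ M := by
    intro i
    have := Finset.single_le_sum (f := fun j => ‖c j‖) (fun j _ => norm_nonneg _) (Finset.mem_univ i)
    simp [hMdef]; linarith
  set W : ℝ := ∑ i, |w i| with hWdef
  have hW0 : 0 ≤ W := Finset.sum_nonneg fun i _ => abs_nonneg _
  set C : ℝ := 2*M*2^p*(1+(p:ℝ))*W with hCdef
  have hC0 : 0 ≤ C := by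
    have : (0:ℝ) ≤ 2*M*2^p*(1+(p:ℝ)) := by positivity
    exact mul_nonneg this hW0
  set R0 : ℝ := M + 3 + 2*M + C/S with hR0
  have hG : Tendsto (fun r : ℝ => (r - M) * (S*(r - M) - C)) atTop atTop := by
    apply Filter.Tendsto.atTop_mul_atTop₀
    · exact tendsto_atTop_add_const_right _ (-M) tendsto_id
    · apply tendsto_atTop_add_const_right
      exact (tendsto_atTop_add_const_right _ (-M) tendsto_id).const_mul_atTop hw
  refine tendsto_atTop_mono' _ ?_ (hG.comp tendsto_comap)
  filter_upwards [Filter.preimage_mem_comap (Ici_mem_atTop R0)] with a ha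
  simp only [Set.mem_preimage, Set.mem_Ici] at ha
  set r : ℝ := ‖a‖ with hr
  set s : ℝ := r - M with hsdef
  have hCS : C / S ≤ s := by simp [hsdef, hr]; linarith [hR0 ▸ ha, hM1]
  have hs3 : 3 ≤ s := by
    have : 0 ≤ C / S := div_nonneg hC0 (le_of_lt hw)
    simp [hsdef]; linarith [hR0 ▸ ha, hM1]
  have hs2M : 2*M ≤ s := by
    have : 0 ≤ C / S := div_nonneg hC0 (le_of_lt hw)
    simp [hsdef]; linarith [hR0 ▸ ha, hM1]
  have hs1 : 1 ≤ s := by linarith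
  have hs0 : (0:ℝ) < s := by linarith
  have hsC : C ≤ S * s := by
    have := (div_le_iff₀ hw).mp hCS
    linarith
  have hlogs : 1 ≤ Real.log s := by
    rw [Real.le_log_iff_exp_le hs0]
    have := Real.exp_one_lt_d9
    linarith
  have ht2s : s + 2*M ≤ 2*s := by linarith
  set t : ℝ := s + 2*M with htdef
  have hst : s ≤ t := by simp [htdef]; linarith
  have hi_lb : ∀ i, s ≤ ‖a - c i‖ := by
    intro i
    have h1 : ‖a‖ - ‖c i‖ ≤ ‖a - c i‖ := norm_sub_norm_le a (c i)
    have := hcM i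
    simp only [hsdef, hr]; linarith
  have hi_ub : ∀ i, ‖a - c i‖ ≤ t := by
    intro i
    have h1 : ‖a - c i‖ ≤ ‖a‖ + ‖c i‖ := norm_sub_le a (c i)
    have := hcM i
    simp only [htdef, hsdef, hr]; linarith
  set Δ : ℝ := t ^ p * Real.log t - s ^ p * Real.log s with hΔdef
  have hΔ0 : 0 ≤ Δ := sub_nonneg.mpr (aux_phi_mono p hs1 hst)
  have key : ∀ i ∈ Finset.univ, w i * (s ^ p * Real.log s) - |w i| * Δ ≤
      w i * (‖a - c i‖ ^ p * Real.log ‖a - c i‖) := by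
    intro i _
    set x := ‖a - c i‖ ^ p * Real.log ‖a - c i‖ with hx
    have hxl : s ^ p * Real.log s ≤ x := aux_phi_mono p hs1 (hi_lb i)
    have hxu : x ≤ t ^ p * Real.log t := aux_phi_mono p (by linarith [hi_lb i]) (hi_ub i)
    rcases le_or_gt 0 (w i) with hpos | hneg
    · have : |w i| = w i := abs_of_nonneg hpos
      rw [this]
      nlinarith
    · have : |w i| = -(w i) := abs_of_neg hneg
      rw [this]
      nlinarith
  have hsum : S * (s ^ p * Real.log s) - W * Δ ≤
      ∑ i, w i * (‖a - c i‖ ^ p * Real.log ‖a - c i‖) := by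
    have := Finset.sum_le_sum key
    calc S * (s ^ p * Real.log s) - W * Δ
        = ∑ i, (w i * (s ^ p * Real.log s) - |w i| * Δ) := by
          rw [Finset.sum_sub_distrib, ← Finset.sum_mul, ← Finset.sum_mul]
    _ ≤ _ := this
  obtain ⟨q, rfl⟩ : ∃ q, p = q + 1 := ⟨p - 1, by omega⟩
  have hΔbnd : Δ ≤ 2*M*2^(q+1)*(1+(q+1 : ℝ)) * (s ^ q * Real.log s) :=
    aux_diff_bound q hs1 hlogs (by linarith) ht2s
  have hfinal : (r - M) * (S*(r - M) - C) ≤ S * (s ^ (q+1) * Real.log s) - W * Δ := by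
    have h1 : W * Δ ≤ W * (2*M*2^(q+1)*(1+(q+1 : ℝ)) * (s ^ q * Real.log s)) :=
      mul_le_mul_of_nonneg_left hΔbnd hW0
    have hsplit : S * (s ^ (q+1) * Real.log s) - W * (2*M*2^(q+1)*(1+(q+1 : ℝ)) * (s ^ q * Real.log s))
        = (s ^ q * Real.log s) * (S * s - C) := by
      rw [hCdef, pow_succ]; push_cast; ring
    have hsq1 : s ≤ s ^ q * Real.log s := by
      have hq1 : 1 ≤ q := by omega
      have hxx : s ≤ s ^ q := by
        calc s = s ^ 1 := (pow_one s).symm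
        _ ≤ s ^ q := pow_le_pow_right₀ hs1 hq1
      nlinarith [pow_nonneg (le_of_lt hs0) q]
    have hSsC : 0 ≤ S * s - C := by linarith
    have hrs : r - M = s := hsdef.symm
    rw [hrs]
    calc s * (S*s - C) ≤ (s ^ q * Real.log s) * (S * s - C) :=
          mul_le_mul_of_nonneg_right hsq1 hSsC
    _ = S * (s ^ (q+1) * Real.log s) - W * (2*M*2^(q+1)*(1+(q+1 : ℝ)) * (s ^ q * Real.log s)) := hsplit.symm
    _ ≤ S * (s ^ (q+1) * Real.log s) - W * Δ := by linarith
  calc ((fun r : ℝ => (r - M) * (S*(r - M) - C)) ∘ fun a : EuclideanSpace ℝ (Fin N) => ‖a‖) a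
      = (r - M) * (S*(r - M) - C) := rfl
  _ ≤ S * (s ^ (q+1) * Real.log s) - W * Δ := hfinal
  _ ≤ _ := hsum
end

section
/- Let N ≥ 1, let p ≥ 1 be an odd integer, let c¹, …, c^{n_c} ∈ ℝ^N be control points, and let w ∈ ℝ^{n_c} satisfy ∑_{i=1}^{n_c} w_i > 0. Define D^mps(a) = ∑_{i=1}^{n_c} w_i ‖a − c^i‖^p, where ‖·‖ is the Euclidean norm. Then D^mps is bounded below on ℝ^N and attains its global minimum: there exists a* ∈ ℝ^N with D^mps(a*) ≤ D^mps(a) for all a ∈ ℝ^N; in particular inf_{a ∈ ℝ^N} D^mps(a) is a (finite) real number. -/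
open Real Filter Topology

private lemma pow_sub_pow_le' {x y : ℝ} (hy : 0 ≤ y) (hxy : y ≤ x) (p : ℕ) :
    x ^ p - y ^ p ≤ p * x ^ (p - 1) * (x - y) := by
  have hx : 0 ≤ x := hy.trans hxy
  rw [← geom_sum₂_mul]
  have hsum : (∑ i ∈ Finset.range p, x ^ i * y ^ (p - 1 - i)) ≤ p * x ^ (p - 1) := by
    calc (∑ i ∈ Finset.range p, x ^ i * y ^ (p - 1 - i))
        ≤ ∑ i ∈ Finset.range p, x ^ (p - 1) := by
          apply Finset.sum_le_sum
          intro i hi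
          have hi' : i < p := Finset.mem_range.mp hi
          calc x ^ i * y ^ (p - 1 - i) ≤ x ^ i * x ^ (p - 1 - i) := by
                exact mul_le_mul_of_nonneg_left (pow_le_pow_left₀ hy hxy _) (pow_nonneg hx _)
            _ = x ^ (p - 1) := by
                rw [← pow_add]
                congr 1
                omega
      _ = p * x ^ (p - 1) := by rw [Finset.sum_const, Finset.card_range, nsmul_eq_mul]
  exact mul_le_mul_of_nonneg_right hsum (by linarith)

theorem stmt8 (N : ℕ) (hN : 1 ≤ N) (p : ℕ) (hodd : Odd p) (hp1 : 1 ≤ p)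
    (nc : ℕ) (c : Fin nc → EuclideanSpace ℝ (Fin N)) (w : Fin nc → ℝ)
    (hw : 0 < ∑ i, w i) :
    BddBelow (Set.range (fun a : EuclideanSpace ℝ (Fin N) => ∑ i, w i * ‖a - c i‖ ^ p)) ∧
    ∃ aStar : EuclideanSpace ℝ (Fin N), ∀ a : EuclideanSpace ℝ (Fin N),
      (∑ i, w i * ‖aStar - c i‖ ^ p) ≤ ∑ i, w i * ‖a - c i‖ ^ p := by
  set f : EuclideanSpace ℝ (Fin N) → ℝ := fun a => ∑ i, w i * ‖a - c i‖ ^ p with hf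
  have hcont : Continuous f := by
    apply continuous_finset_sum
    intro i _
    exact continuous_const.mul (((continuous_id.sub continuous_const).norm).pow p)
  set s : ℝ := ∑ i, w i with hs
  set R : ℝ := ∑ i, ‖c i‖ with hR
  have hR0 : 0 ≤ R := Finset.sum_nonneg fun i _ => norm_nonneg _
  have hRi : ∀ i, ‖c i‖ ≤ R := fun i =>
    Finset.single_le_sum (fun j _ => norm_nonneg (c j)) (Finset.mem_univ i)
  set P : ℝ := ∑ i, max (w i) 0 with hP
  set Qm : ℝ := ∑ i, max (-(w i)) 0 with hQm
  have hQm0 : 0 ≤ Qm := Finset.sum_nonneg fun i _ => le_max_right _ _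
  have hPQ : P - Qm = s := by
    rw [hP, hQm, ← Finset.sum_sub_distrib]
    exact Finset.sum_congr rfl fun i _ => max_zero_sub_max_neg_zero_eq_self (w i)
  set K : ℝ := Qm * (p * 2 ^ (p - 1) * (2 * R)) with hK
  have hK0 : 0 ≤ K := by positivity
  set M : ℝ := max (3 * R + 1) (R + K / s) with hM
  -- key lower bound
  have key : ∀ a : EuclideanSpace ℝ (Fin N), M ≤ ‖a‖ → s * (‖a‖ - R) - K ≤ f a := by
    intro a ha
    set t : ℝ := ‖a‖ with ht
    have ht3R : 3 * R + 1 ≤ t := le_trans (le_max_left _ _) ha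
    have htK : R + K / s ≤ t := le_trans (le_max_right _ _) ha
    set u : ℝ := t - R with hu
    have hu1 : 1 ≤ u := by simp only [hu]; linarith
    have hu0 : 0 ≤ u := by linarith
    have hsuK : K ≤ s * u := by
      have : K / s ≤ u := by simp only [hu]; linarith
      calc K = s * (K / s) := by field_simp
        _ ≤ s * u := mul_le_mul_of_nonneg_left this hw.le
    have hbound : ∀ i : Fin nc, u ≤ ‖a - c i‖ ∧ ‖a - c i‖ ≤ t + R := by
      intro i
      constructor
      · have := norm_sub_norm_le a (c i)
        have := hRi i
        simp only [hu, ht]; linarith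
      · have := norm_sub_le a (c i)
        have := hRi i
        linarith
    have step1 : P * u ^ p - Qm * (t + R) ^ p ≤ f a := by
      rw [hf]
      have : P * u ^ p - Qm * (t + R) ^ p
          = ∑ i, (max (w i) 0 * u ^ p - max (-(w i)) 0 * (t + R) ^ p) := by
        rw [Finset.sum_sub_distrib, ← Finset.sum_mul, ← Finset.sum_mul]
      rw [this]
      apply Finset.sum_le_sum
      intro i _
      have hb := hbound i
      have hx0 : (0:ℝ) ≤ ‖a - c i‖ := norm_nonneg _
      have h1 : u ^ p ≤ ‖a - c i‖ ^ p := pow_le_pow_left₀ hu0 hb.1 p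
      have h2 : ‖a - c i‖ ^ p ≤ (t + R) ^ p := pow_le_pow_left₀ hx0 hb.2 p
      have hw' : w i = max (w i) 0 - max (-(w i)) 0 :=
        (max_zero_sub_max_neg_zero_eq_self (w i)).symm
      calc max (w i) 0 * u ^ p - max (-(w i)) 0 * (t + R) ^ p
          ≤ max (w i) 0 * ‖a - c i‖ ^ p - max (-(w i)) 0 * ‖a - c i‖ ^ p :=
            sub_le_sub (mul_le_mul_of_nonneg_left h1 (le_max_right _ _))
              (mul_le_mul_of_nonneg_left h2 (le_max_right _ _))
        _ = (max (w i) 0 - max (-(w i)) 0) * ‖a - c i‖ ^ p := by ring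
        _ = w i * ‖a - c i‖ ^ p := by rw [max_zero_sub_max_neg_zero_eq_self]
    -- bound (t+R)^p
    have hur : u ≤ t + R := by linarith
    have hdiff : (t + R) ^ p - u ^ p ≤ p * (t + R) ^ (p - 1) * (2 * R) := by
      have := pow_sub_pow_le' hu0 hur p
      have h2 : (t + R) - u = 2 * R := by simp only [hu]; ring
      calc (t + R) ^ p - u ^ p ≤ p * (t + R) ^ (p - 1) * ((t + R) - u) := this
        _ = p * (t + R) ^ (p - 1) * (2 * R) := by rw [h2]
    have h2u : t + R ≤ 2 * u := by simp only [hu]; linarith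
    have hpow2 : (t + R) ^ (p - 1) ≤ 2 ^ (p - 1) * u ^ (p - 1) := by
      calc (t + R) ^ (p - 1) ≤ (2 * u) ^ (p - 1) := pow_le_pow_left₀ (by linarith) h2u _
        _ = 2 ^ (p - 1) * u ^ (p - 1) := mul_pow 2 u (p - 1)
    have hQbound : Qm * (t + R) ^ p ≤ Qm * u ^ p + K * u ^ (p - 1) := by
      have : (t + R) ^ p ≤ u ^ p + p * (2 ^ (p - 1) * u ^ (p - 1)) * (2 * R) := by
        nlinarith [hdiff, hpow2, mul_nonneg (mul_nonneg (Nat.cast_nonneg p : (0:ℝ) ≤ p)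
          (sub_nonneg.mpr hpow2)) (by linarith : (0:ℝ) ≤ 2 * R)]
      calc Qm * (t + R) ^ p ≤ Qm * (u ^ p + p * (2 ^ (p - 1) * u ^ (p - 1)) * (2 * R)) :=
            mul_le_mul_of_nonneg_left this hQm0
        _ = Qm * u ^ p + K * u ^ (p - 1) := by rw [hK]; ring
    have hfin : s * u - K ≤ f a := by
      have hupow : u ^ p = u ^ (p - 1) * u := by
        conv_lhs => rw [show p = (p - 1) + 1 by omega]
        rw [pow_succ]
      have hu_pow1 : 1 ≤ u ^ (p - 1) := one_le_pow₀ hu1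
      have h1 : s * u ^ p - K * u ^ (p - 1) ≤ f a := by
        have hPs : P * u ^ p - Qm * u ^ p = s * u ^ p := by rw [← hPQ]; ring
        linarith [step1, hQbound]
      have h2 : s * u - K ≤ s * u ^ p - K * u ^ (p - 1) := by
        have : s * u - K ≤ u ^ (p - 1) * (s * u - K) := le_mul_of_one_le_left (by linarith) hu_pow1
        calc s * u - K ≤ u ^ (p - 1) * (s * u - K) := this
          _ = s * u ^ p - K * u ^ (p - 1) := by rw [hupow]; ring
      linarith
    simpa only [hu] using hfin
  -- coercivity
  have hcoer : Tendsto f (cocompact (EuclideanSpace ℝ (Fin N))) atTop := by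
    have hlin : Tendsto (fun t : ℝ => s * (t - R) - K) atTop atTop := by
      apply tendsto_atTop_add_const_right
      exact (tendsto_atTop_add_const_right _ (-R) tendsto_id).const_mul_atTop hw
    have hnorm : Tendsto (fun a : EuclideanSpace ℝ (Fin N) => ‖a‖)
        (cocompact _) atTop := tendsto_norm_cocompact_atTop
    apply tendsto_atTop_mono' _ _ (hlin.comp hnorm)
    filter_upwards [hnorm.eventually_ge_atTop M] with a ha
    exact key a ha
  obtain ⟨aStar, hmin⟩ := hcont.exists_forall_le hcoer
  refine ⟨⟨f aStar, ?_⟩, aStar, hmin⟩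
  rintro x ⟨a, rfl⟩
  exact hmin a
end

section
/- Let N ≥ 1, let p ≥ 1 be an odd integer, let c¹, …, c^{n_c} ∈ ℝ^N be control points, let w ∈ ℝ^{n_c} satisfy ∑_{i=1}^{n_c} w_i > 0, and let T > 0. Define D^mps(a) = ∑_{i=1}^{n_c} w_i ‖a − c^i‖^p, where ‖·‖ is the Euclidean norm. Then the function a ↦ exp(−D^mps(a)/T) is Lebesgue integrable on ℝ^N: ∫_{ℝ^N} exp(−D^mps(a)/T) da < +∞. -/
open Real Filter Topology MeasureTheory

/-- Integrability of `exp (-(δ * ‖x‖))` on a Euclidean space. -/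
lemma aux_exp_integrable (N : ℕ) {δ : ℝ} (hδ : 0 < δ) :
    Integrable (fun x : EuclideanSpace ℝ (Fin N) => Real.exp (-(δ * ‖x‖))) := by
  have hfr : Module.finrank ℝ (EuclideanSpace ℝ (Fin N)) = N := by
    simp [finrank_euclideanSpace]
  have hnr : (Module.finrank ℝ (EuclideanSpace ℝ (Fin N)) : ℝ) < ((N : ℝ) + 1) := by
    rw [hfr]; linarith
  set M : ℝ := max 1 ((N + 1) / δ) with hM
  have hM1 : (1 : ℝ) ≤ M := le_max_left _ _
  have hM0 : (0 : ℝ) < M := lt_of_lt_of_le one_pos hM1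
  have hMδ : ((N : ℝ) + 1) ≤ M * δ := by
    have : ((N : ℝ) + 1) / δ ≤ M := le_max_right _ _
    calc ((N : ℝ) + 1) = ((N : ℝ) + 1) / δ * δ := by field_simp
    _ ≤ M * δ := by nlinarith
  refine ((integrable_one_add_norm hnr).const_mul (M ^ (N + 1))).mono'
    ((Real.continuous_exp.comp ((continuous_const.mul continuous_norm).neg)).aestronglyMeasurable)
    (Filter.Eventually.of_forall fun x => ?_)
  set t : ℝ := ‖x‖ with ht
  have ht0 : 0 ≤ t := norm_nonneg x
  rw [Real.norm_of_nonneg (Real.exp_pos _).le]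
  -- key pointwise inequality
  have hkey : (1 + t) ^ (N + 1) ≤ M ^ (N + 1) * Real.exp (δ * t) := by
    have hstep : 1 + t ≤ M * Real.exp (δ * t / (N + 1)) := by
      have hexp : 1 + δ * t / (N + 1) ≤ Real.exp (δ * t / (N + 1)) :=
        Real.add_one_le_exp _ |>.trans_eq' (by ring_nf)
      have hlin : 1 + t ≤ M * (1 + δ * t / (N + 1)) := by
        have hN1 : (0 : ℝ) < (N : ℝ) + 1 := by positivity
        have h2 : t ≤ M * δ * t / ((N : ℝ) + 1) := by
          rw [le_div_iff₀ hN1]; nlinarith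
        calc 1 + t ≤ M + M * δ * t / ((N : ℝ) + 1) := by linarith
        _ = M * (1 + δ * t / (N + 1)) := by ring
      calc 1 + t ≤ M * (1 + δ * t / (N + 1)) := hlin
      _ ≤ M * Real.exp (δ * t / (N + 1)) := by nlinarith [Real.exp_pos (δ * t / (N + 1))]
    calc (1 + t) ^ (N + 1) ≤ (M * Real.exp (δ * t / (N + 1))) ^ (N + 1) :=
          pow_le_pow_left₀ (by linarith) hstep _
    _ = M ^ (N + 1) * Real.exp (δ * t / (N + 1)) ^ (N + 1) := by rw [mul_pow]
    _ = M ^ (N + 1) * Real.exp (δ * t) := by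
        rw [← Real.exp_nat_mul]
        congr 1
        push_cast; field_simp
  have h1t : (0 : ℝ) < 1 + t := by linarith
  have hrpow : (1 + t) ^ (-((N : ℝ) + 1)) = ((1 + t) ^ (N + 1) : ℝ)⁻¹ := by
    rw [Real.rpow_neg h1t.le]
    congr 1
    rw [show ((N : ℝ) + 1) = ((N + 1 : ℕ) : ℝ) by push_cast; ring, Real.rpow_natCast]
  rw [hrpow, ← div_eq_mul_inv, le_div_iff₀ (by positivity : (0:ℝ) < (1 + t) ^ (N + 1))]
  calc Real.exp (-(δ * t)) * (1 + t) ^ (N + 1)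
      ≤ Real.exp (-(δ * t)) * (M ^ (N + 1) * Real.exp (δ * t)) :=
        mul_le_mul_of_nonneg_left hkey (Real.exp_pos _).le
    _ = M ^ (N + 1) * (Real.exp (-(δ * t)) * Real.exp (δ * t)) := by ring
    _ = M ^ (N + 1) := by rw [← Real.exp_add, neg_add_cancel, Real.exp_zero, mul_one]

theorem stmt9 (N : ℕ) (hN : 1 ≤ N) (p : ℕ) (hodd : Odd p) (hp1 : 1 ≤ p)
    (nc : ℕ) (c : Fin nc → EuclideanSpace ℝ (Fin N)) (w : Fin nc → ℝ)
    (hw : 0 < ∑ i, w i) (T : ℝ) (hT : 0 < T) :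
    Integrable (fun a : EuclideanSpace ℝ (Fin N) =>
      Real.exp (-((∑ i, w i * ‖a - c i‖ ^ p) / T))) := by
  set ε : ℝ := ∑ i, w i with hε
  set s : Fin nc → ℝ := fun i => if 0 ≤ w i then -‖c i‖ else ‖c i‖ with hs
  set D : EuclideanSpace ℝ (Fin N) → ℝ := fun a => ∑ i, w i * ‖a - c i‖ ^ p with hD
  have hmono : Monotone (fun x : ℝ => x ^ p) := hodd.strictMono_pow.monotone
  -- per-term lower bound
  have hterm : ∀ (a : EuclideanSpace ℝ (Fin N)) i,
      w i * (‖a‖ + s i) ^ p ≤ w i * ‖a - c i‖ ^ p := by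
    intro a i
    by_cases hwi : 0 ≤ w i
    · simp only [hs, if_pos hwi]
      apply mul_le_mul_of_nonneg_left _ hwi
      apply hmono
      have := norm_sub_norm_le a (c i)
      linarith
    · simp only [hs, if_neg hwi]
      push_neg at hwi
      apply mul_le_mul_of_nonpos_left _ hwi.le
      apply hmono
      exact norm_sub_le a (c i)
  -- asymptotics of the lower bound polynomial
  have hlim : Tendsto (fun r : ℝ => ∑ i, w i * (1 + s i / r) ^ p) atTop (𝓝 ε) := by
    have : ε = ∑ i : Fin nc, w i * (1 + 0 : ℝ) ^ p := by simp [hε]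
    rw [this]
    apply tendsto_finset_sum
    intro i _
    apply Tendsto.const_mul
    apply Tendsto.pow
    exact tendsto_const_nhds.add (Tendsto.div_atTop tendsto_const_nhds tendsto_id)
  have hev : ∀ᶠ r : ℝ in atTop, ε / 2 ≤ ∑ i, w i * (1 + s i / r) ^ p :=
    hlim.eventually (eventually_ge_nhds (by linarith : ε / 2 < ε))
  obtain ⟨R', hR'⟩ := Filter.eventually_atTop.mp hev
  set R : ℝ := max R' 1 with hRdef
  have hR1 : (1 : ℝ) ≤ R := le_max_right _ _
  have hp0 : p ≠ 0 := by omega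
  -- far-field lower bound
  have hfar : ∀ a : EuclideanSpace ℝ (Fin N), R ≤ ‖a‖ → ε / 2 * ‖a‖ ≤ D a := by
    intro a ha
    set r : ℝ := ‖a‖ with hr
    have hr1 : (1 : ℝ) ≤ r := le_trans hR1 ha
    have hr0 : r ≠ 0 := by linarith
    have hsum : ∑ i, w i * (r + s i) ^ p = r ^ p * ∑ i, w i * (1 + s i / r) ^ p := by
      rw [Finset.mul_sum]
      apply Finset.sum_congr rfl
      intro i _
      have : r + s i = r * (1 + s i / r) := by field_simp
      rw [this, mul_pow]
      ring
    have hS : ε / 2 ≤ ∑ i, w i * (1 + s i / r) ^ p :=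
      hR' r (le_trans (le_max_left _ _) ha)
    have h1 : ε / 2 * r ≤ ε / 2 * r ^ p := by
      have : r ≤ r ^ p := le_self_pow₀ hr1 hp0
      nlinarith
    have h2 : ε / 2 * r ^ p ≤ r ^ p * ∑ i, w i * (1 + s i / r) ^ p := by
      have hrp : (0 : ℝ) ≤ r ^ p := by positivity
      calc ε / 2 * r ^ p = r ^ p * (ε / 2) := by ring
      _ ≤ r ^ p * ∑ i, w i * (1 + s i / r) ^ p := mul_le_mul_of_nonneg_left hS hrp
    have h3 : ∑ i, w i * (r + s i) ^ p ≤ D a :=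
      Finset.sum_le_sum fun i _ => hterm a i
    rw [hsum] at h3
    linarith
  -- near-field lower bound
  set C : ℝ := ∑ i, |w i| * (R + ‖c i‖) ^ p with hCdef
  have hC0 : 0 ≤ C := Finset.sum_nonneg fun i _ => by positivity
  have hnear : ∀ a : EuclideanSpace ℝ (Fin N), ‖a‖ ≤ R → -C ≤ D a := by
    intro a ha
    have : ∀ i ∈ Finset.univ, -(|w i| * (R + ‖c i‖) ^ p) ≤ w i * ‖a - c i‖ ^ p := by
      intro i _
      have hx0 : (0 : ℝ) ≤ ‖a - c i‖ ^ p := by positivity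
      have hxb : ‖a - c i‖ ^ p ≤ (R + ‖c i‖) ^ p := by
        apply pow_le_pow_left₀ (norm_nonneg _)
        calc ‖a - c i‖ ≤ ‖a‖ + ‖c i‖ := norm_sub_le _ _
        _ ≤ R + ‖c i‖ := by linarith
      have h1 : -(|w i|) * ‖a - c i‖ ^ p ≤ w i * ‖a - c i‖ ^ p :=
        mul_le_mul_of_nonneg_right (neg_abs_le _) hx0
      have h2 : -(|w i|) * (R + ‖c i‖) ^ p ≤ -(|w i|) * ‖a - c i‖ ^ p :=
        mul_le_mul_of_nonpos_left hxb (by simp [abs_nonneg])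
      calc -(|w i| * (R + ‖c i‖) ^ p) = -(|w i|) * (R + ‖c i‖) ^ p := by ring
      _ ≤ -(|w i|) * ‖a - c i‖ ^ p := h2
      _ ≤ w i * ‖a - c i‖ ^ p := h1
    have := Finset.sum_le_sum this
    rw [Finset.sum_neg_distrib] at this
    exact this.trans_eq rfl
  -- global lower bound
  have hC'0 : 0 ≤ C + ε / 2 * R := by
    have : 0 ≤ ε / 2 * R := by positivity
    linarith
  have hglob : ∀ a : EuclideanSpace ℝ (Fin N), ε / 2 * ‖a‖ - (C + ε / 2 * R) ≤ D a := by
    intro a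
    rcases le_or_gt R ‖a‖ with h | h
    · have := hfar a h
      linarith
    · have := hnear a h.le
      have hb : ε / 2 * ‖a‖ ≤ ε / 2 * R := by nlinarith [norm_nonneg a]
      linarith
  -- conclude by comparison
  have hδ : (0 : ℝ) < ε / (2 * T) := by positivity
  refine ((aux_exp_integrable N hδ).const_mul (Real.exp ((C + ε / 2 * R) / T))).mono'
    ?_ (Filter.Eventually.of_forall fun a => ?_)
  · apply Continuous.aestronglyMeasurable
    apply Real.continuous_exp.comp
    apply Continuous.neg
    apply Continuous.div_const
    apply continuous_finset_sum
    intro i _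
    exact continuous_const.mul (((continuous_id.sub continuous_const).norm).pow p)
  · rw [Real.norm_of_nonneg (Real.exp_pos _).le, ← Real.exp_add]
    apply Real.exp_le_exp.mpr
    have h2 : (ε / 2 * ‖a‖ - (C + ε / 2 * R)) / T ≤ D a / T :=
      div_le_div_of_nonneg_right (hglob a) hT.le
    have h3 : (ε / 2 * ‖a‖ - (C + ε / 2 * R)) / T = ε / (2 * T) * ‖a‖ - (C + ε / 2 * R) / T := by
      field_simp
    rw [h3] at h2
    linarith
end

section
/- Let N ≥ 1, let p ≥ 3 be an odd integer, let c¹, …, c^{n_c} ∈ ℝ^N be control points, let w ∈ ℝ^{n_c} satisfy ∑_{i=1}^{n_c} w_i > 0, and let T > 0. Define D^mps(a) = ∑_{i=1}^{n_c} w_i ‖a − c^i‖^p and G(a) = p ∑_{i=1}^{n_c} w_i (a − c^i) ‖a − c^i‖^{p−2}, where ‖·‖ is the Euclidean norm. Then the function a ↦ ‖G(a)‖ exp(−D^mps(a)/T) is Lebesgue integrable on ℝ^N: ∫_{ℝ^N} ‖G(a)‖ exp(−D^mps(a)/T) da < +∞. -/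
open Real Filter Topology MeasureTheory

lemma pow_lip (n : ℕ) {x y M : ℝ} (hx : 0 ≤ x) (hy : 0 ≤ y) (hxM : x ≤ M) (hyM : y ≤ M) :
    |x ^ n - y ^ n| ≤ n * M ^ (n - 1) * |x - y| := by
  have hM : 0 ≤ M := le_trans hx hxM
  have key : ∀ u v : ℝ, 0 ≤ u → 0 ≤ v → u ≤ M → v ≤ M → v ≤ u →
      u ^ n - v ^ n ≤ n * M ^ (n - 1) * (u - v) := by
    intro u v hu hv huM hvM hvu
    rw [← geom_sum₂_mul u v n]
    have hsum : (∑ i ∈ Finset.range n, u ^ i * v ^ (n - 1 - i)) ≤ n * M ^ (n - 1) := by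
      calc (∑ i ∈ Finset.range n, u ^ i * v ^ (n - 1 - i))
          ≤ ∑ _i ∈ Finset.range n, M ^ (n - 1) := by
            apply Finset.sum_le_sum
            intro i hi
            have hi' : i ≤ n - 1 := by have := Finset.mem_range.mp hi; omega
            calc u ^ i * v ^ (n - 1 - i) ≤ M ^ i * M ^ (n - 1 - i) :=
                  mul_le_mul (pow_le_pow_left₀ hu huM i) (pow_le_pow_left₀ hv hvM _)
                    (pow_nonneg hv _) (pow_nonneg hM _)
              _ = M ^ (n - 1) := by rw [← pow_add]; congr 1; omega
        _ = n * M ^ (n - 1) := by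
            rw [Finset.sum_const, Finset.card_range, nsmul_eq_mul]
    exact mul_le_mul_of_nonneg_right hsum (sub_nonneg.mpr hvu)
  rcases le_total y x with h | h
  · rw [abs_of_nonneg (sub_nonneg.mpr (pow_le_pow_left₀ hy h n)),
      abs_of_nonneg (sub_nonneg.mpr h)]
    exact key x y hx hy hxM hyM h
  · rw [abs_sub_comm, abs_sub_comm x y,
      abs_of_nonneg (sub_nonneg.mpr (pow_le_pow_left₀ hx h n)),
      abs_of_nonneg (sub_nonneg.mpr h)]
    exact key y x hy hx hyM hxM h

set_option maxHeartbeats 1000000 in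
theorem stmt10 (N : ℕ) (hN : 1 ≤ N) (p : ℕ) (hodd : Odd p) (hp3 : 3 ≤ p)
    (nc : ℕ) (c : Fin nc → EuclideanSpace ℝ (Fin N)) (w : Fin nc → ℝ)
    (hw : 0 < ∑ i, w i) (T : ℝ) (hT : 0 < T) :
    Integrable (fun a : EuclideanSpace ℝ (Fin N) =>
      ‖(p : ℝ) • ∑ i, (w i * ‖a - c i‖ ^ (p - 2)) • (a - c i)‖ *
        Real.exp (-((∑ i, w i * ‖a - c i‖ ^ p) / T))) := by
  have hp1 : p - 2 + 1 = p - 1 := by omega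
  have hp2 : p - 1 + 1 = p := by omega
  set s := ∑ i, w i with hs
  set R := ∑ i, ‖c i‖ with hR
  set W := ∑ i, |w i| with hW
  have hR0 : 0 ≤ R := Finset.sum_nonneg fun i _ => norm_nonneg _
  have hW0 : 0 ≤ W := Finset.sum_nonneg fun i _ => abs_nonneg _
  have hRc : ∀ i, ‖c i‖ ≤ R := fun i =>
    Finset.single_le_sum (fun j _ => norm_nonneg (c j)) (Finset.mem_univ i)
  set b := s / (2 * T) with hb
  have hb0 : 0 < b := div_pos hw (by linarith)
  set f := fun a : EuclideanSpace ℝ (Fin N) =>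
    ‖(p : ℝ) • ∑ i, (w i * ‖a - c i‖ ^ (p - 2)) • (a - c i)‖ *
      Real.exp (-((∑ i, w i * ‖a - c i‖ ^ p) / T)) with hf
  have hcont : Continuous f := by rw [hf]; fun_prop
  -- upper bound on the gradient norm
  have hGb : ∀ a : EuclideanSpace ℝ (Fin N),
      ‖(p : ℝ) • ∑ i, (w i * ‖a - c i‖ ^ (p - 2)) • (a - c i)‖ ≤
        (p : ℝ) * (W * (‖a‖ + R) ^ (p - 1)) := by
    intro a
    rw [norm_smul, Real.norm_natCast]
    apply mul_le_mul_of_nonneg_left ?_ (Nat.cast_nonneg p)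
    calc ‖∑ i, (w i * ‖a - c i‖ ^ (p - 2)) • (a - c i)‖
        ≤ ∑ i, ‖(w i * ‖a - c i‖ ^ (p - 2)) • (a - c i)‖ := norm_sum_le _ _
      _ ≤ ∑ i, |w i| * (‖a‖ + R) ^ (p - 1) := by
          apply Finset.sum_le_sum
          intro i _
          rw [norm_smul]
          have hac : ‖a - c i‖ ≤ ‖a‖ + R := (norm_sub_le a (c i)).trans (by linarith [hRc i])
          calc ‖w i * ‖a - c i‖ ^ (p - 2)‖ * ‖a - c i‖
              = |w i| * (‖a - c i‖ ^ (p - 2) * ‖a - c i‖) := by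
                rw [Real.norm_eq_abs, abs_mul,
                  abs_of_nonneg (pow_nonneg (norm_nonneg (a - c i)) (p - 2)), mul_assoc]
            _ = |w i| * ‖a - c i‖ ^ (p - 1) := by rw [← pow_succ, hp1]
            _ ≤ |w i| * (‖a‖ + R) ^ (p - 1) :=
                mul_le_mul_of_nonneg_left (pow_le_pow_left₀ (norm_nonneg _) hac _) (abs_nonneg _)
      _ = W * (‖a‖ + R) ^ (p - 1) := by rw [hW, Finset.sum_mul]
  -- lower bound on the potential
  have hDb : ∀ a : EuclideanSpace ℝ (Fin N),
      s * ‖a‖ ^ p - W * ((p : ℝ) * (‖a‖ + R) ^ (p - 1) * R) ≤ ∑ i, w i * ‖a - c i‖ ^ p := by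
    intro a
    have key : |∑ i, w i * ‖a - c i‖ ^ p - s * ‖a‖ ^ p| ≤
        W * ((p : ℝ) * (‖a‖ + R) ^ (p - 1) * R) := by
      have hsplit : ∑ i, w i * ‖a - c i‖ ^ p - s * ‖a‖ ^ p
          = ∑ i, w i * (‖a - c i‖ ^ p - ‖a‖ ^ p) := by
        rw [hs, Finset.sum_mul, ← Finset.sum_sub_distrib]
        exact Finset.sum_congr rfl fun i _ => by ring
      rw [hsplit]
      calc |∑ i, w i * (‖a - c i‖ ^ p - ‖a‖ ^ p)|
          ≤ ∑ i, |w i * (‖a - c i‖ ^ p - ‖a‖ ^ p)| := Finset.abs_sum_le_sum_abs _ _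
        _ ≤ ∑ i, |w i| * ((p : ℝ) * (‖a‖ + R) ^ (p - 1) * R) := by
            apply Finset.sum_le_sum
            intro i _
            rw [abs_mul]
            apply mul_le_mul_of_nonneg_left ?_ (abs_nonneg _)
            have h1 : ‖a - c i‖ ≤ ‖a‖ + R := (norm_sub_le a (c i)).trans (by linarith [hRc i])
            have h2 : ‖a‖ ≤ ‖a‖ + R := by linarith
            have h3 := pow_lip p (norm_nonneg (a - c i)) (norm_nonneg a) h1 h2
            have h4 : |‖a - c i‖ - ‖a‖| ≤ R := by
              have := abs_norm_sub_norm_le (a - c i) a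
              have h5 : a - c i - a = -c i := by abel
              rw [h5, norm_neg] at this
              exact this.trans (hRc i)
            calc |‖a - c i‖ ^ p - ‖a‖ ^ p|
                ≤ (p : ℝ) * (‖a‖ + R) ^ (p - 1) * |‖a - c i‖ - ‖a‖| := h3
              _ ≤ (p : ℝ) * (‖a‖ + R) ^ (p - 1) * R :=
                  mul_le_mul_of_nonneg_left h4 (by positivity)
        _ = W * ((p : ℝ) * (‖a‖ + R) ^ (p - 1) * R) := by rw [hW, Finset.sum_mul]
    have := (abs_le.mp key).1
    linarith
  -- eventual bound along cocompact
  have hfg : ∀ᶠ a in cocompact (EuclideanSpace ℝ (Fin N)),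
      ‖f a‖ ≤ 1 * ‖(1 + ‖a‖) ^ (-(N + 1 : ℝ))‖ := by
    set C : ℝ := (p : ℝ) * W * 2 ^ (p - 1) * 2 ^ (N + 1) with hC
    have hC0 : 0 ≤ C := by positivity
    have t0 : Tendsto (fun r : ℝ => C * (r ^ ((p + N : ℕ) : ℝ) * Real.exp (-b * r)))
        atTop (𝓝 0) := by
      simpa using (tendsto_rpow_mul_exp_neg_mul_atTop_nhds_zero ((p + N : ℕ) : ℝ) b hb0).const_mul C
    have t1 : ∀ᶠ r : ℝ in atTop, C * (r ^ ((p + N : ℕ) : ℝ) * Real.exp (-b * r)) < 1 :=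
      t0.eventually (gt_mem_nhds one_pos)
    have hQ : ∀ᶠ r : ℝ in atTop,
        (R ≤ r ∧ 1 ≤ r) ∧ W * ((p : ℝ) * (r + R) ^ (p - 1) * R) ≤ s / 2 * r ^ p ∧
          (p : ℝ) * (W * (r + R) ^ (p - 1)) * Real.exp (-(b * r ^ p)) ≤
            (1 + r) ^ (-(N + 1 : ℝ)) := by
      filter_upwards [eventually_ge_atTop R, eventually_ge_atTop 1,
        eventually_ge_atTop (2 / s * (W * ((p : ℝ) * 2 ^ (p - 1) * R))), t1]
        with r hRr h1r h2r h3r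
      have hr0 : (0:ℝ) < r := lt_of_lt_of_le one_pos h1r
      have hrR : r + R ≤ 2 * r := by linarith
      have hrR0 : (0:ℝ) ≤ r + R := by linarith
      have e1 : (r + R) ^ (p - 1) ≤ 2 ^ (p - 1) * r ^ (p - 1) := by
        calc (r + R) ^ (p - 1) ≤ (2 * r) ^ (p - 1) := pow_le_pow_left₀ hrR0 hrR _
          _ = 2 ^ (p - 1) * r ^ (p - 1) := mul_pow 2 r (p - 1)
      have hrp : r ^ p = r * r ^ (p - 1) := by
        conv_lhs => rw [← hp2, pow_succ]
        ring
      refine ⟨⟨hRr, h1r⟩, ?_, ?_⟩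
      · -- part 2
        have k1 : W * ((p : ℝ) * 2 ^ (p - 1) * R) ≤ s / 2 * r := by
          have := mul_le_mul_of_nonneg_left h2r (le_of_lt (by positivity : (0:ℝ) < s / 2))
          calc W * ((p : ℝ) * 2 ^ (p - 1) * R)
              = s / 2 * (2 / s * (W * ((p : ℝ) * 2 ^ (p - 1) * R))) := by
                field_simp
            _ ≤ s / 2 * r := this
        calc W * ((p : ℝ) * (r + R) ^ (p - 1) * R)
            ≤ W * ((p : ℝ) * (2 ^ (p - 1) * r ^ (p - 1)) * R) := by
              apply mul_le_mul_of_nonneg_left ?_ hW0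
              apply mul_le_mul_of_nonneg_right ?_ hR0
              exact mul_le_mul_of_nonneg_left e1 (Nat.cast_nonneg p)
          _ = W * ((p : ℝ) * 2 ^ (p - 1) * R) * r ^ (p - 1) := by ring
          _ ≤ s / 2 * r * r ^ (p - 1) :=
              mul_le_mul_of_nonneg_right k1 (by positivity)
          _ = s / 2 * r ^ p := by rw [hrp]; ring
      · -- part 3
        have hexp : Real.exp (-(b * r ^ p)) ≤ Real.exp (-b * r) := by
          apply Real.exp_le_exp.mpr
          have : r ≤ r ^ p := le_self_pow₀ h1r (by omega)
          nlinarith [hb0.le]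
        have h1plus : (0:ℝ) < 1 + r := by linarith
        have e2 : (1 + r) ^ (N + 1) ≤ 2 ^ (N + 1) * r ^ (N + 1) := by
          calc (1 + r) ^ (N + 1) ≤ (2 * r) ^ (N + 1) :=
              pow_le_pow_left₀ h1plus.le (by linarith) _
            _ = 2 ^ (N + 1) * r ^ (N + 1) := mul_pow 2 r (N + 1)
        have key2 : (p : ℝ) * (W * (r + R) ^ (p - 1)) * Real.exp (-(b * r ^ p)) *
            (1 + r) ^ (N + 1) ≤ 1 := by
          have lhs_le : (p : ℝ) * (W * (r + R) ^ (p - 1)) * Real.exp (-(b * r ^ p)) *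
              (1 + r) ^ (N + 1) ≤ C * (r ^ (p + N) * Real.exp (-b * r)) := by
            have step : (p : ℝ) * (W * (r + R) ^ (p - 1)) * Real.exp (-(b * r ^ p)) *
                (1 + r) ^ (N + 1) ≤
                (p : ℝ) * (W * (2 ^ (p - 1) * r ^ (p - 1))) * Real.exp (-b * r) *
                (2 ^ (N + 1) * r ^ (N + 1)) := by
              apply mul_le_mul
              · apply mul_le_mul
                · apply mul_le_mul_of_nonneg_left ?_ (Nat.cast_nonneg p)
                  exact mul_le_mul_of_nonneg_left e1 hW0
                · exact hexp
                · positivity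
                · positivity
              · exact e2
              · positivity
              · positivity
            refine step.trans (le_of_eq ?_)
            have : r ^ (p - 1) * r ^ (N + 1) = r ^ (p + N) := by
              rw [← pow_add]; congr 1; omega
            rw [hC, ← this]; ring
          have rpow_eq : r ^ ((p + N : ℕ) : ℝ) = r ^ (p + N) := Real.rpow_natCast r (p + N)
          rw [rpow_eq] at h3r
          linarith
        have hpos : (0:ℝ) < (1 + r) ^ (N + 1) := by positivity
        have : (p : ℝ) * (W * (r + R) ^ (p - 1)) * Real.exp (-(b * r ^ p)) ≤
            ((1 + r) ^ (N + 1) : ℝ)⁻¹ := by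
          rw [← one_div, le_div_iff₀ hpos]
          exact key2
        refine this.trans (le_of_eq ?_)
        rw [show (-(N + 1 : ℝ)) = -((N + 1 : ℕ) : ℝ) by push_cast; ring,
          Real.rpow_neg h1plus.le, Real.rpow_natCast]
    filter_upwards [tendsto_norm_cocompact_atTop.eventually hQ] with a ha
    obtain ⟨⟨hRr, h1r⟩, h2, h3⟩ := ha
    have hD : b * ‖a‖ ^ p ≤ (∑ i, w i * ‖a - c i‖ ^ p) / T := by
      have h5 : s / 2 * ‖a‖ ^ p ≤ ∑ i, w i * ‖a - c i‖ ^ p := by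
        have := hDb a
        linarith
      calc b * ‖a‖ ^ p = (s / 2 * ‖a‖ ^ p) / T := by rw [hb]; field_simp
        _ ≤ (∑ i, w i * ‖a - c i‖ ^ p) / T := div_le_div_of_nonneg_right h5 hT.le
    have hfa : ‖f a‖ ≤ (p : ℝ) * (W * (‖a‖ + R) ^ (p - 1)) * Real.exp (-(b * ‖a‖ ^ p)) := by
      have e2 : Real.exp (-((∑ i, w i * ‖a - c i‖ ^ p) / T)) ≤ Real.exp (-(b * ‖a‖ ^ p)) :=
        Real.exp_le_exp.mpr (by linarith)
      have e3 : (0:ℝ) ≤ (p : ℝ) * (W * (‖a‖ + R) ^ (p - 1)) :=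
        mul_nonneg (Nat.cast_nonneg p)
          (mul_nonneg hW0 (pow_nonneg (add_nonneg (norm_nonneg a) hR0) _))
      simp only [hf]
      rw [Real.norm_of_nonneg (mul_nonneg (norm_nonneg _) (Real.exp_pos _).le)]
      exact mul_le_mul (hGb a) e2 (Real.exp_pos _).le e3
    rw [one_mul, Real.norm_of_nonneg (Real.rpow_nonneg
      (by linarith [norm_nonneg a] : (0:ℝ) ≤ 1 + ‖a‖) _)]
    exact hfa.trans h3
  -- conclude
  have hint : Integrable (fun a : EuclideanSpace ℝ (Fin N) => (1 + ‖a‖) ^ (-(N + 1 : ℝ))) := by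
    apply integrable_one_add_norm (μ := volume)
    rw [finrank_euclideanSpace_fin]
    linarith
  exact (hcont.locallyIntegrable).integrable_of_isBigO_cocompact
    (Asymptotics.IsBigO.of_bound 1 hfg) (hint.integrableAtFilter _)
end
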